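/- For every real γ > 0, 2 + γ² − γ(5 + 2γ²)W(γ) − (1/(4γ⁴π)) ∫₀^π ∫₀^∞ ∫₀^{x₂} x₁·x₂·exp(−x₁·φ/π − x₂ − x₂²/(4γ²)) dx₁ dx₂ dφ = (1/γ)·[ 3γ + γ³ − W(γ)·(2γ⁴ + 7γ² + 2) + 2·W(2γ) ]. -/

import Mathlib

open MeasureTheory Real

/-- `W x = exp (x²) · ∫_x^∞ exp (−t²) dt`, i.e. `(√π/2)·erfcx x`. -/
noncomputable def W (x : ℝ) : ℝ := Real.exp (x ^ 2) * ∫ t in Set.Ioi x, Real.exp (-(t ^ 2))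

open Set Filter


-- splitting lemma
lemma E_split (x : ℝ) :
    (∫ t in Set.Ioi x, Real.exp (-(t ^ 2)))
      = (∫ t in Set.Ioi (0:ℝ), Real.exp (-(t ^ 2))) - ∫ t in (0:ℝ)..x, Real.exp (-(t ^ 2)) := by
  have hint : Integrable (fun t : ℝ => Real.exp (-(t ^ 2))) := by
    have := integrable_exp_neg_mul_sq (one_pos)
    simpa using this
  rcases le_or_gt 0 x with hx | hx
  · rw [eq_sub_iff_add_eq, intervalIntegral.integral_of_le hx, add_comm,
      ← MeasureTheory.setIntegral_union (Set.Ioc_disjoint_Ioi le_rfl) measurableSet_Ioi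
        hint.integrableOn hint.integrableOn, Set.Ioc_union_Ioi_eq_Ioi hx]
  · rw [eq_sub_iff_add_eq, intervalIntegral.integral_of_ge hx.le, ← sub_eq_add_neg,
      sub_eq_iff_eq_add, add_comm, eq_comm,
      ← MeasureTheory.setIntegral_union (Set.Ioc_disjoint_Ioi le_rfl) measurableSet_Ioi
        hint.integrableOn hint.integrableOn, Set.Ioc_union_Ioi_eq_Ioi hx.le]

lemma hasDerivAt_W (x : ℝ) : HasDerivAt W (2 * x * W x - 1) x := by
  have hc : Continuous fun t : ℝ => Real.exp (-(t ^ 2)) := by continuity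
  have h1 : HasDerivAt (fun u : ℝ => ∫ t in (0:ℝ)..u, Real.exp (-(t ^ 2)))
      (Real.exp (-(x ^ 2))) x :=
    intervalIntegral.integral_hasDerivAt_right (hc.intervalIntegrable _ _)
      (hc.stronglyMeasurable.stronglyMeasurableAtFilter) hc.continuousAt
  have hE : HasDerivAt (fun u : ℝ => ∫ t in Set.Ioi u, Real.exp (-(t ^ 2)))
      (-Real.exp (-(x ^ 2))) x := by
    have := (h1.const_sub (∫ t in Set.Ioi (0:ℝ), Real.exp (-(t ^ 2))))
    refine this.congr_of_eventuallyEq ?_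
    filter_upwards with u
    rw [E_split]
  have hexp : HasDerivAt (fun u : ℝ => Real.exp (u ^ 2)) (2 * x * Real.exp (x ^ 2)) x := by
    have : HasDerivAt (fun u : ℝ => u ^ 2) (2 * x) x := by
      simpa using hasDerivAt_pow 2 x
    simpa [mul_comm] using this.exp
  have := hexp.fun_mul hE
  have hone : Real.exp (x ^ 2) * Real.exp (-(x ^ 2)) = 1 := by
    rw [← Real.exp_add]; simp
  refine this.congr_deriv ?_
  unfold W; linear_combination -hone

lemma W_nonneg (x : ℝ) : 0 ≤ W x := by
  unfold W
  apply mul_nonneg (Real.exp_pos _).le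
  apply MeasureTheory.setIntegral_nonneg measurableSet_Ioi
  exact fun t _ => (Real.exp_pos _).le

lemma integral_Ioi_mul_exp (y : ℝ) :
    ∫ t in Set.Ioi y, t * Real.exp (-(t ^ 2)) = Real.exp (-(y ^ 2)) / 2 := by
  have hint : IntegrableOn (fun t : ℝ => t * Real.exp (-(t ^ 2))) (Set.Ioi y) := by
    have := integrable_mul_exp_neg_mul_sq (one_pos)
    simpa using this.integrableOn
  have := MeasureTheory.integral_Ioi_of_hasDerivAt_of_tendsto
    (f := fun t : ℝ => -Real.exp (-(t ^ 2)) / 2)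
    (f' := fun t : ℝ => t * Real.exp (-(t ^ 2))) (a := y) (m := 0)
    ?_ ?_ hint ?_
  · rw [this]; ring
  · apply ContinuousAt.continuousWithinAt; fun_prop
  · intro t _
    have h1 : HasDerivAt (fun t : ℝ => -(t ^ 2)) (-(2 * t)) t := by
      simpa using (hasDerivAt_pow 2 t).fun_neg
    have := (h1.exp.fun_neg.div_const 2)
    refine this.congr_deriv ?_
    simp [Real.exp_neg]; ring
  · rw [show (0:ℝ) = -0/2 by norm_num]
    apply Filter.Tendsto.div_const
    apply Filter.Tendsto.neg
    rw [show (0:ℝ) = -0 by norm_num] at *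
    have : Filter.Tendsto (fun t : ℝ => t ^ 2) Filter.atTop Filter.atTop :=
      tendsto_pow_atTop (by norm_num)
    simpa using (Real.tendsto_exp_neg_atTop_nhds_zero.comp this)

lemma W_le (y : ℝ) (hy : 0 < y) : W y ≤ 1 / (2 * y) := by
  have hEle : (∫ t in Set.Ioi y, Real.exp (-(t ^ 2)))
      ≤ ∫ t in Set.Ioi y, (t / y) * Real.exp (-(t ^ 2)) := by
    apply MeasureTheory.setIntegral_mono_on
    · exact (integrable_exp_neg_mul_sq one_pos).integrableOn.congr_fun
        (fun t _ => by norm_num) measurableSet_Ioi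
    · have := integrable_mul_exp_neg_mul_sq (one_pos)
      have h2 : IntegrableOn (fun x : ℝ => x * Real.exp (-1 * x ^ 2) / y) (Set.Ioi y) :=
        (this.integrableOn (s := Set.Ioi y)).div_const y
      apply h2.congr_fun _ measurableSet_Ioi
      intro t _; norm_num; ring
    · exact measurableSet_Ioi
    · intro t ht
      have h1 : 1 ≤ t / y := (one_le_div hy).2 (le_of_lt ht)
      nlinarith [Real.exp_pos (-(t ^ 2))]
  have h2 : (∫ t in Set.Ioi y, (t / y) * Real.exp (-(t ^ 2)))
      = Real.exp (-(y ^ 2)) / (2 * y) := by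
    have : ∀ t : ℝ, (t / y) * Real.exp (-(t ^ 2)) = (1 / y) * (t * Real.exp (-(t ^ 2))) := by
      intro t; ring
    simp_rw [this]
    rw [MeasureTheory.integral_const_mul, integral_Ioi_mul_exp]
    ring
  unfold W
  calc Real.exp (y ^ 2) * ∫ t in Set.Ioi y, Real.exp (-(t ^ 2))
      ≤ Real.exp (y ^ 2) * (Real.exp (-(y ^ 2)) / (2 * y)) := by
        apply mul_le_mul_of_nonneg_left (hEle.trans h2.le) (Real.exp_pos _).le
    _ = 1 / (2 * y) := by
        rw [← mul_div_assoc, ← Real.exp_add]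
        simp

noncomputable def Es (γ s x : ℝ) : ℝ := Real.exp (-(s * x) - x ^ 2 / (4 * γ ^ 2))
noncomputable def Gs (γ s x : ℝ) : ℝ := Es γ s x * W (x / (2 * γ) + s * γ)

lemma Es_pos (γ s x : ℝ) : 0 < Es γ s x := Real.exp_pos _

lemma Es_le (γ s x : ℝ) (hs : 0 ≤ s) (hx : 0 ≤ x) : Es γ s x ≤ Real.exp (-(s * x)) := by
  apply Real.exp_le_exp.2
  have : 0 ≤ x ^ 2 / (4 * γ ^ 2) := by positivity
  linarith

lemma hasDerivAt_Es (γ s x : ℝ) (hγ : γ ≠ 0) :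
    HasDerivAt (Es γ s) ((-s - x / (2 * γ ^ 2)) * Es γ s x) x := by
  have h1 : HasDerivAt (fun x : ℝ => -(s * x) - x ^ 2 / (4 * γ ^ 2))
      (-s - x / (2 * γ ^ 2)) x := by
    have ha : HasDerivAt (fun x : ℝ => -(s * x)) (-s) x := by
      simpa using ((hasDerivAt_id x).const_mul s).fun_neg
    have hb : HasDerivAt (fun x : ℝ => x ^ 2 / (4 * γ ^ 2)) (2 * x / (4 * γ ^ 2)) x := by
      simpa using (hasDerivAt_pow 2 x).div_const (4 * γ ^ 2)
    refine (ha.sub hb).congr_deriv ?_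
    field_simp
    ring
  have := h1.exp
  refine this.congr_deriv ?_
  unfold Es
  ring

lemma hasDerivAt_Gs (γ s x : ℝ) (hγ : γ ≠ 0) :
    HasDerivAt (Gs γ s) (-(1 / (2 * γ)) * Es γ s x) x := by
  have hy : HasDerivAt (fun x : ℝ => x / (2 * γ) + s * γ) (1 / (2 * γ)) x := by
    simpa using ((hasDerivAt_id x).div_const (2 * γ)).add_const (s * γ)
  have hW : HasDerivAt (fun x : ℝ => W (x / (2 * γ) + s * γ))
      ((2 * (x / (2 * γ) + s * γ) * W (x / (2 * γ) + s * γ) - 1) * (1 / (2 * γ))) x :=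
    HasDerivAt.comp (h₂ := W) x (hasDerivAt_W (x / (2 * γ) + s * γ)) hy
  have := (hasDerivAt_Es γ s x hγ).fun_mul hW
  refine this.congr_deriv ?_
  field_simp
  ring

lemma tendsto_Gs (γ s : ℝ) (hγ : 0 < γ) (hs : 0 < s) :
    Filter.Tendsto (Gs γ s) Filter.atTop (nhds 0) := by
  apply squeeze_zero_norm' (a := fun x => Real.exp (-(s * x)) * (1 / (2 * (s * γ))))
  · filter_upwards [Filter.eventually_ge_atTop (0:ℝ)] with x hx
    have hy : 0 < x / (2 * γ) + s * γ := by positivity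
    have h1 : W (x / (2 * γ) + s * γ) ≤ 1 / (2 * (s * γ)) := by
      refine (W_le _ hy).trans ?_
      apply div_le_div_of_nonneg_left one_pos.le (by positivity)
      nlinarith [div_nonneg hx (by positivity : (0:ℝ) ≤ 2 * γ)]
    rw [Real.norm_eq_abs, Gs, abs_of_nonneg (mul_nonneg (Es_pos γ s x).le (W_nonneg _))]
    exact mul_le_mul (Es_le γ s x hs.le hx) h1 (W_nonneg _) (Real.exp_pos _).le
  · rw [show (0:ℝ) = 0 * (1 / (2 * (s * γ))) by ring]
    apply Filter.Tendsto.mul_const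
    have : Filter.Tendsto (fun x : ℝ => s * x) Filter.atTop Filter.atTop :=
      Filter.Tendsto.const_mul_atTop hs Filter.tendsto_id
    exact Real.tendsto_exp_neg_atTop_nhds_zero.comp this

lemma integral_main (γ : ℝ) (hγ : 0 < γ) :
    ∫ x in Set.Ioi (0:ℝ), ((x ^ 2 - x) * Es γ 1 x + x * Es γ 2 x)
      = 8 * γ ^ 3 * (1 + γ ^ 2) * W γ - 4 * γ ^ 4 - 8 * γ ^ 3 * W (2 * γ) := by
  have hne : γ ≠ 0 := hγ.ne'
  set F : ℝ → ℝ := fun x => (-8 * γ ^ 3 - 8 * γ ^ 5) * Gs γ 1 x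
      + (4 * γ ^ 4 + 2 * γ ^ 2 + (-2 * γ ^ 2) * x) * Es γ 1 x
      + (-2 * γ ^ 2) * Es γ 2 x + 8 * γ ^ 3 * Gs γ 2 x with hFdef
  have hF : ∀ x, HasDerivAt F ((x ^ 2 - x) * Es γ 1 x + x * Es γ 2 x) x := by
    intro x
    have h1 := (hasDerivAt_Gs γ 1 x hne).const_mul (-8 * γ ^ 3 - 8 * γ ^ 5)
    have hpoly : HasDerivAt (fun x : ℝ => 4 * γ ^ 4 + 2 * γ ^ 2 + (-2 * γ ^ 2) * x)
        (-2 * γ ^ 2) x := by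
      have h := ((hasDerivAt_id x).const_mul (-2 * γ ^ 2)).const_add (4 * γ ^ 4 + 2 * γ ^ 2)
      simpa only [id_eq, mul_one] using h
    have h2 := hpoly.fun_mul (hasDerivAt_Es γ 1 x hne)
    have h3 := (hasDerivAt_Es γ 2 x hne).const_mul (-2 * γ ^ 2)
    have h4 := (hasDerivAt_Gs γ 2 x hne).const_mul (8 * γ ^ 3)
    have := ((h1.fun_add h2).fun_add h3).fun_add h4
    refine this.congr_deriv ?_
    field_simp
    ring
  have e1 : ∀ x : ℝ, 0 ≤ x → Es γ 1 x ≤ Real.exp (-x) := by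
    intro x hx
    apply Real.exp_le_exp.2
    have : 0 ≤ x ^ 2 / (4 * γ ^ 2) := by positivity
    linarith
  have e2 : ∀ x : ℝ, 0 ≤ x → Es γ 2 x ≤ Real.exp (-x) := by
    intro x hx
    apply Real.exp_le_exp.2
    have : 0 ≤ x ^ 2 / (4 * γ ^ 2) := by positivity
    linarith
  have hint : IntegrableOn (fun x : ℝ => (x ^ 2 - x) * Es γ 1 x + x * Es γ 2 x)
      (Set.Ioi 0) := by
    have h1 := Real.GammaIntegral_convergent (by norm_num : (0:ℝ) < 3)
    have h2 := Real.GammaIntegral_convergent (by norm_num : (0:ℝ) < 2)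
    have hg : IntegrableOn (fun x : ℝ => Real.exp (-x) * x ^ ((3:ℝ) - 1)
        + 2 * (Real.exp (-x) * x ^ ((2:ℝ) - 1))) (Set.Ioi 0) := h1.add (h2.const_mul 2)
    apply hg.integrable.mono'
    · apply Measurable.aestronglyMeasurable
      apply Measurable.add
      · exact ((measurable_id.pow_const 2).sub measurable_id).mul (by unfold Es; fun_prop)
      · exact measurable_id.mul (by unfold Es; fun_prop)
    · rw [MeasureTheory.ae_restrict_iff' measurableSet_Ioi]
      filter_upwards with x hx
      have hx' : (0:ℝ) ≤ x := le_of_lt hx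
      have hr3 : x ^ ((3:ℝ) - 1) = x ^ 2 := by
        rw [show (3:ℝ) - 1 = ((2:ℕ):ℝ) by norm_num, Real.rpow_natCast]
      have hr2 : x ^ ((2:ℝ) - 1) = x := by
        rw [show (2:ℝ) - 1 = (1:ℝ) by norm_num, Real.rpow_one]
      rw [Real.norm_eq_abs, hr3, hr2]
      have hA : |(x ^ 2 - x) * Es γ 1 x| ≤ (x ^ 2 + x) * Real.exp (-x) := by
        rw [abs_mul, abs_of_pos (Es_pos γ 1 x)]
        apply mul_le_mul _ (e1 x hx') (Es_pos γ 1 x).le (by positivity)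
        rw [abs_le]; constructor <;> nlinarith
      have hB : |x * Es γ 2 x| ≤ x * Real.exp (-x) := by
        rw [abs_mul, abs_of_pos (Es_pos γ 2 x), abs_of_nonneg hx']
        exact mul_le_mul_of_nonneg_left (e2 x hx') hx'
      calc |(x ^ 2 - x) * Es γ 1 x + x * Es γ 2 x|
          ≤ |(x ^ 2 - x) * Es γ 1 x| + |x * Es γ 2 x| := abs_add_le _ _
        _ ≤ (x ^ 2 + x) * Real.exp (-x) + x * Real.exp (-x) := add_le_add hA hB
        _ = Real.exp (-x) * x ^ 2 + 2 * (Real.exp (-x) * x) := by ring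
  have hx_exp : Filter.Tendsto (fun x : ℝ => x * Real.exp (-x)) Filter.atTop (nhds 0) := by
    simpa using tendsto_pow_mul_exp_neg_atTop_nhds_zero 1
  have hexp : Filter.Tendsto (fun x : ℝ => Real.exp (-x)) Filter.atTop (nhds 0) :=
    Real.tendsto_exp_neg_atTop_nhds_zero
  have hFtop : Filter.Tendsto F Filter.atTop (nhds 0) := by
    rw [hFdef]
    have t1 := (tendsto_Gs γ 1 hγ one_pos).const_mul (-8 * γ ^ 3 - 8 * γ ^ 5)
    have t4 := (tendsto_Gs γ 2 hγ two_pos).const_mul (8 * γ ^ 3)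
    have t2 : Filter.Tendsto (fun x : ℝ => (4 * γ ^ 4 + 2 * γ ^ 2 + (-2 * γ ^ 2) * x) * Es γ 1 x)
        Filter.atTop (nhds 0) := by
      apply squeeze_zero_norm'
        (a := fun x => (4 * γ ^ 4 + 2 * γ ^ 2) * Real.exp (-x) + 2 * γ ^ 2 * (x * Real.exp (-x)))
      · filter_upwards [Filter.eventually_ge_atTop (0:ℝ)] with x hx
        rw [Real.norm_eq_abs, abs_mul, abs_of_pos (Es_pos γ 1 x)]
        have h5 : |4 * γ ^ 4 + 2 * γ ^ 2 + (-2 * γ ^ 2) * x| ≤ 4 * γ ^ 4 + 2 * γ ^ 2 + 2 * γ ^ 2 * x := by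
          rw [abs_le]; constructor <;> nlinarith [sq_nonneg γ, sq_nonneg (γ^2)]
        calc |4 * γ ^ 4 + 2 * γ ^ 2 + (-2 * γ ^ 2) * x| * Es γ 1 x
            ≤ (4 * γ ^ 4 + 2 * γ ^ 2 + 2 * γ ^ 2 * x) * Real.exp (-x) := by
              apply mul_le_mul h5 (e1 x hx) (Es_pos γ 1 x).le (by positivity)
          _ = (4 * γ ^ 4 + 2 * γ ^ 2) * Real.exp (-x) + 2 * γ ^ 2 * (x * Real.exp (-x)) := by ring
      · rw [show (0:ℝ) = (4 * γ ^ 4 + 2 * γ ^ 2) * 0 + 2 * γ ^ 2 * 0 by ring]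
        exact (hexp.const_mul _).add (hx_exp.const_mul _)
    have t3 : Filter.Tendsto (fun x : ℝ => (-2 * γ ^ 2) * Es γ 2 x) Filter.atTop (nhds 0) := by
      apply squeeze_zero_norm' (a := fun x => 2 * γ ^ 2 * Real.exp (-x))
      · filter_upwards [Filter.eventually_ge_atTop (0:ℝ)] with x hx
        rw [Real.norm_eq_abs, abs_mul, abs_of_pos (Es_pos γ 2 x)]
        have : |(-2 * γ ^ 2)| = 2 * γ ^ 2 := by
          rw [abs_of_nonpos (by nlinarith [sq_nonneg γ])]; ring
        rw [this]
        exact mul_le_mul_of_nonneg_left (e2 x hx) (by positivity)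
      · rw [show (0:ℝ) = 2 * γ ^ 2 * 0 by ring]
        exact hexp.const_mul _
    have := ((t1.add t2).add t3).add t4
    simpa only [mul_zero, add_zero, zero_add] using this
  have hval := MeasureTheory.integral_Ioi_of_hasDerivAt_of_tendsto
    (f := F) (f' := fun x => (x ^ 2 - x) * Es γ 1 x + x * Es γ 2 x) (a := 0) (m := 0)
    (hF 0).continuousAt.continuousWithinAt (fun x _ => hF x) hint hFtop
  rw [hval, hFdef]
  have hGs1 : Gs γ 1 0 = W γ := by
    unfold Gs Es
    norm_num
  have hGs2 : Gs γ 2 0 = W (2 * γ) := by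
    unfold Gs Es
    norm_num
  have hEs1 : Es γ 1 0 = 1 := by unfold Es; norm_num
  have hEs2 : Es γ 2 0 = 1 := by unfold Es; norm_num
  simp only [hGs1, hGs2, hEs1, hEs2]
  ring

lemma inner_phi (γ x₂ x₁ : ℝ) (hx₁ : 0 < x₁) :
    ∫ φ in Set.Ioc (0:ℝ) π, x₁ * x₂ * Real.exp (-(x₁ * φ / π) - x₂ - x₂ ^ 2 / (4 * γ ^ 2))
      = π * x₂ * (Real.exp (-x₂ - x₂ ^ 2 / (4 * γ ^ 2))
          - Real.exp (-x₁ - x₂ - x₂ ^ 2 / (4 * γ ^ 2))) := by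
  rw [← intervalIntegral.integral_of_le Real.pi_pos.le]
  have hd : ∀ φ : ℝ, HasDerivAt
      (fun φ : ℝ => -(π * x₂) * Real.exp (-(x₁ * φ / π) - x₂ - x₂ ^ 2 / (4 * γ ^ 2)))
      (x₁ * x₂ * Real.exp (-(x₁ * φ / π) - x₂ - x₂ ^ 2 / (4 * γ ^ 2))) φ := by
    intro φ
    have hu : HasDerivAt (fun φ : ℝ => -(x₁ * φ / π) - x₂ - x₂ ^ 2 / (4 * γ ^ 2))
        (-(x₁ / π)) φ := by
      have h1 : HasDerivAt (fun φ : ℝ => x₁ * φ / π) (x₁ / π) φ := by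
        have := ((hasDerivAt_id φ).const_mul x₁).div_const π
        simpa using this
      simpa using ((h1.neg).sub_const x₂).sub_const (x₂ ^ 2 / (4 * γ ^ 2))
    have := (hu.exp.const_mul (-(π * x₂)))
    refine this.congr_deriv ?_
    field_simp
  have hcont : Continuous
      (fun φ : ℝ => x₁ * x₂ * Real.exp (-(x₁ * φ / π) - x₂ - x₂ ^ 2 / (4 * γ ^ 2))) := by
    fun_prop
  rw [intervalIntegral.integral_eq_sub_of_hasDerivAt (fun φ _ => hd φ)
    (hcont.intervalIntegrable _ _)]
  rw [show x₁ * π / π = x₁ by field_simp]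
  ring

lemma C_val (γ x₂ : ℝ) (hγ : 0 < γ) (hx₂ : 0 < x₂) :
    ∫ φ in Set.Ioc (0:ℝ) π,
        (∫ x₁ in (0:ℝ)..x₂, x₁ * x₂ * Real.exp (-(x₁ * φ / π) - x₂ - x₂ ^ 2 / (4 * γ ^ 2)))
      = π * x₂ * Real.exp (-x₂ - x₂ ^ 2 / (4 * γ ^ 2)) * (x₂ - 1 + Real.exp (-x₂)) := by
  simp_rw [intervalIntegral.integral_of_le hx₂.le]
  have hswap := MeasureTheory.integral_integral_swap
    (f := fun φ x₁ => x₁ * x₂ * Real.exp (-(x₁ * φ / π) - x₂ - x₂ ^ 2 / (4 * γ ^ 2)))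
    (μ := volume.restrict (Set.Ioc (0:ℝ) π)) (ν := volume.restrict (Set.Ioc (0:ℝ) x₂)) ?_
  · rw [hswap]
    have h1 : ∫ x₁ in Set.Ioc (0:ℝ) x₂,
        (∫ φ in Set.Ioc (0:ℝ) π, x₁ * x₂ * Real.exp (-(x₁ * φ / π) - x₂ - x₂ ^ 2 / (4 * γ ^ 2)))
      = ∫ x₁ in Set.Ioc (0:ℝ) x₂, π * x₂ * (Real.exp (-x₂ - x₂ ^ 2 / (4 * γ ^ 2))
          - Real.exp (-x₁ - x₂ - x₂ ^ 2 / (4 * γ ^ 2))) := by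
      apply MeasureTheory.setIntegral_congr_fun measurableSet_Ioc
      intro x₁ hx₁
      exact inner_phi γ x₂ x₁ hx₁.1
    rw [h1, ← intervalIntegral.integral_of_le hx₂.le]
    have hd : ∀ x₁ : ℝ, HasDerivAt
        (fun x₁ : ℝ => π * x₂ * (x₁ * Real.exp (-x₂ - x₂ ^ 2 / (4 * γ ^ 2))
            + Real.exp (-x₁ - x₂ - x₂ ^ 2 / (4 * γ ^ 2))))
        (π * x₂ * (Real.exp (-x₂ - x₂ ^ 2 / (4 * γ ^ 2))
            - Real.exp (-x₁ - x₂ - x₂ ^ 2 / (4 * γ ^ 2)))) x₁ := by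
      intro x₁
      have ha : HasDerivAt (fun x₁ : ℝ => x₁ * Real.exp (-x₂ - x₂ ^ 2 / (4 * γ ^ 2)))
          (Real.exp (-x₂ - x₂ ^ 2 / (4 * γ ^ 2))) x₁ := by
        simpa using (hasDerivAt_id x₁).mul_const (Real.exp (-x₂ - x₂ ^ 2 / (4 * γ ^ 2)))
      have hu : HasDerivAt (fun x₁ : ℝ => -x₁ - x₂ - x₂ ^ 2 / (4 * γ ^ 2)) (-1) x₁ := by
        simpa using ((hasDerivAt_id x₁).neg.sub_const x₂).sub_const (x₂ ^ 2 / (4 * γ ^ 2))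
      have := (ha.fun_add hu.exp).const_mul (π * x₂)
      refine this.congr_deriv ?_
      ring
    have hcont : Continuous (fun x₁ : ℝ => π * x₂ * (Real.exp (-x₂ - x₂ ^ 2 / (4 * γ ^ 2))
        - Real.exp (-x₁ - x₂ - x₂ ^ 2 / (4 * γ ^ 2)))) := by fun_prop
    rw [intervalIntegral.integral_eq_sub_of_hasDerivAt (fun x₁ _ => hd x₁)
      (hcont.intervalIntegrable _ _)]
    have hK2 : Real.exp (-x₂ - x₂ - x₂ ^ 2 / (4 * γ ^ 2))
        = Real.exp (-x₂) * Real.exp (-x₂ - x₂ ^ 2 / (4 * γ ^ 2)) := by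
      rw [← Real.exp_add]; congr 1; ring
    have hK0 : Real.exp (-(0:ℝ) - x₂ - x₂ ^ 2 / (4 * γ ^ 2))
        = Real.exp (-x₂ - x₂ ^ 2 / (4 * γ ^ 2)) := by
      congr 1; ring
    rw [hK2, hK0]
    ring
  · constructor
    · apply Continuous.aestronglyMeasurable
      show Continuous (fun p : ℝ × ℝ => p.2 * x₂ * Real.exp (-(p.2 * p.1 / π) - x₂ - x₂ ^ 2 / (4 * γ ^ 2)))
      fun_prop
    · apply MeasureTheory.HasFiniteIntegral.mono'
        (g := fun _ : ℝ × ℝ => x₂ * x₂)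
      · apply MeasureTheory.hasFiniteIntegral_const
      · rw [MeasureTheory.Measure.prod_restrict, MeasureTheory.ae_restrict_iff'
          (measurableSet_Ioc.prod measurableSet_Ioc)]
        filter_upwards with p hp
        obtain ⟨hφ, hx₁⟩ := hp
        show ‖p.2 * x₂ * Real.exp (-(p.2 * p.1 / π) - x₂ - x₂ ^ 2 / (4 * γ ^ 2))‖ ≤ x₂ * x₂
        rw [Real.norm_eq_abs, abs_of_nonneg
          (mul_nonneg (mul_nonneg hx₁.1.le hx₂.le) (Real.exp_pos _).le)]
        have hexp : Real.exp (-(p.2 * p.1 / π) - x₂ - x₂ ^ 2 / (4 * γ ^ 2)) ≤ 1 := by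
          rw [show (1:ℝ) = Real.exp 0 by simp]
          apply Real.exp_le_exp.2
          have h1 : 0 ≤ p.2 * p.1 / π := by
            apply div_nonneg (mul_nonneg hx₁.1.le hφ.1.le) Real.pi_pos.le
          have h2 : 0 ≤ x₂ ^ 2 / (4 * γ ^ 2) := by positivity
          linarith [hx₂.le]
        calc p.2 * x₂ * Real.exp (-(p.2 * p.1 / π) - x₂ - x₂ ^ 2 / (4 * γ ^ 2))
            ≤ p.2 * x₂ * 1 := by
              apply mul_le_mul_of_nonneg_left hexp (mul_nonneg hx₁.1.le hx₂.le)
          _ ≤ x₂ * x₂ := by nlinarith [hx₁.1.le, hx₁.2]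

theorem linear_approx_lower_bound_closed_form (γ : ℝ) (hγ : 0 < γ) :
    2 + γ ^ 2 - γ * (5 + 2 * γ ^ 2) * W γ -
      (1 / (4 * γ ^ 4 * π)) *
        ∫ φ in (0 : ℝ)..π,
          ∫ x₂ in Set.Ioi (0 : ℝ),
            ∫ x₁ in (0 : ℝ)..x₂,
              x₁ * x₂ * Real.exp (-(x₁ * φ / π) - x₂ - x₂ ^ 2 / (4 * γ ^ 2))
    = (1 / γ) * (3 * γ + γ ^ 3 - W γ * (2 * γ ^ 4 + 7 * γ ^ 2 + 2) + 2 * W (2 * γ)) := by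
  have hne : γ ≠ 0 := hγ.ne'
  set g : (ℝ × ℝ) × ℝ → ℝ := fun q =>
    q.2 * q.1.2 * Real.exp (-(q.2 * q.1.1 / π) - q.1.2 - q.1.2 ^ 2 / (4 * γ ^ 2)) with hgdef
  set S : Set ((ℝ × ℝ) × ℝ) := {q | 0 < q.2 ∧ q.2 ≤ q.1.2} with hSdef
  set N : ℝ × ℝ → ℝ := fun p => ∫ x₁, S.indicator g (p, x₁) with hNdef
  have hS : MeasurableSet S := by
    apply MeasurableSet.inter
    · exact measurableSet_lt measurable_const measurable_snd
    · exact measurableSet_le measurable_snd (measurable_fst.snd)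
  have hgcont : Continuous g := by fun_prop
  have hNB : ∀ φ x₂ : ℝ, 0 ≤ x₂ →
      (∫ x₁ in (0:ℝ)..x₂, x₁ * x₂ * Real.exp (-(x₁ * φ / π) - x₂ - x₂ ^ 2 / (4 * γ ^ 2)))
        = N (φ, x₂) := by
    intro φ x₂ hx₂
    rw [intervalIntegral.integral_of_le hx₂,
      ← MeasureTheory.integral_indicator measurableSet_Ioc]
    congr 1
  have hNmeas : MeasureTheory.StronglyMeasurable N :=
    (hgcont.stronglyMeasurable.indicator hS).integral_prod_right'
  haveI : IsFiniteMeasure (volume.restrict (Set.Ioc (0:ℝ) π)) :=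
    ⟨by rw [MeasureTheory.Measure.restrict_apply_univ]; exact measure_Ioc_lt_top⟩
  have hΓ : IntegrableOn (fun x : ℝ => Real.exp (-x) * x ^ ((4:ℝ) - 1)) (Set.Ioi 0) :=
    Real.GammaIntegral_convergent (by norm_num)
  have hdom : MeasureTheory.Integrable
      (fun z : ℝ × ℝ => (1:ℝ) * (Real.exp (-z.2) * z.2 ^ ((4:ℝ) - 1)))
      ((volume.restrict (Set.Ioc (0:ℝ) π)).prod (volume.restrict (Set.Ioi (0:ℝ)))) :=
    MeasureTheory.Integrable.mul_prod (MeasureTheory.integrable_const 1) hΓ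
  have hNint : MeasureTheory.Integrable N
      ((volume.restrict (Set.Ioc (0:ℝ) π)).prod (volume.restrict (Set.Ioi (0:ℝ)))) := by
    apply hdom.mono' hNmeas.aestronglyMeasurable
    rw [MeasureTheory.Measure.prod_restrict, MeasureTheory.ae_restrict_iff'
      (measurableSet_Ioc.prod measurableSet_Ioi)]
    filter_upwards with p hp
    obtain ⟨hφ, hx₂⟩ := hp
    rw [← hNB p.1 p.2 hx₂.le]
    have hb : ∀ x₁ ∈ Set.uIoc (0:ℝ) p.2,
        ‖x₁ * p.2 * Real.exp (-(x₁ * p.1 / π) - p.2 - p.2 ^ 2 / (4 * γ ^ 2))‖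
          ≤ p.2 ^ 2 * Real.exp (-p.2) := by
      intro x₁ hx₁
      rw [Set.uIoc_of_le hx₂.le] at hx₁
      rw [Real.norm_eq_abs, abs_of_nonneg
        (mul_nonneg (mul_nonneg hx₁.1.le hx₂.le) (Real.exp_pos _).le)]
      have hexp : Real.exp (-(x₁ * p.1 / π) - p.2 - p.2 ^ 2 / (4 * γ ^ 2))
          ≤ Real.exp (-p.2) := by
        apply Real.exp_le_exp.2
        have h1 : 0 ≤ x₁ * p.1 / π :=
          div_nonneg (mul_nonneg hx₁.1.le hφ.1.le) Real.pi_pos.le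
        have h2 : 0 ≤ p.2 ^ 2 / (4 * γ ^ 2) := by positivity
        linarith
      calc x₁ * p.2 * Real.exp (-(x₁ * p.1 / π) - p.2 - p.2 ^ 2 / (4 * γ ^ 2))
          ≤ p.2 * p.2 * Real.exp (-p.2) := by
            apply mul_le_mul (mul_le_mul_of_nonneg_right hx₁.2 hx₂.le) hexp
              (Real.exp_pos _).le (by nlinarith [le_of_lt (Set.mem_Ioi.mp hx₂)])
        _ = p.2 ^ 2 * Real.exp (-p.2) := by ring
    have := intervalIntegral.norm_integral_le_of_norm_le_const hb
    refine this.trans ?_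
    rw [sub_zero, abs_of_pos hx₂, show ((4:ℝ) - 1) = ((3:ℕ):ℝ) by norm_num,
      Real.rpow_natCast]
    exact le_of_eq (by ring)
  have hT : (∫ φ in (0:ℝ)..π, ∫ x₂ in Set.Ioi (0:ℝ), ∫ x₁ in (0:ℝ)..x₂,
        x₁ * x₂ * Real.exp (-(x₁ * φ / π) - x₂ - x₂ ^ 2 / (4 * γ ^ 2)))
      = π * (8 * γ ^ 3 * (1 + γ ^ 2) * W γ - 4 * γ ^ 4 - 8 * γ ^ 3 * W (2 * γ)) := by
    rw [intervalIntegral.integral_of_le Real.pi_pos.le]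
    have step1 : (∫ φ in Set.Ioc (0:ℝ) π, ∫ x₂ in Set.Ioi (0:ℝ), ∫ x₁ in (0:ℝ)..x₂,
          x₁ * x₂ * Real.exp (-(x₁ * φ / π) - x₂ - x₂ ^ 2 / (4 * γ ^ 2)))
        = ∫ φ in Set.Ioc (0:ℝ) π, ∫ x₂ in Set.Ioi (0:ℝ), N (φ, x₂) := by
      apply MeasureTheory.setIntegral_congr_fun measurableSet_Ioc
      intro φ _
      exact MeasureTheory.setIntegral_congr_fun measurableSet_Ioi
        (fun x₂ hx₂ => hNB φ x₂ (le_of_lt hx₂))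
    rw [step1, MeasureTheory.integral_integral_swap (by exact hNint)]
    have step2 : (∫ x₂ in Set.Ioi (0:ℝ), ∫ φ in Set.Ioc (0:ℝ) π, N (φ, x₂))
        = ∫ x₂ in Set.Ioi (0:ℝ), π * ((x₂ ^ 2 - x₂) * Es γ 1 x₂ + x₂ * Es γ 2 x₂) := by
      apply MeasureTheory.setIntegral_congr_fun measurableSet_Ioi
      intro x₂ hx₂
      dsimp only
      have h1 : (∫ φ in Set.Ioc (0:ℝ) π, N (φ, x₂))
          = ∫ φ in Set.Ioc (0:ℝ) π, ∫ x₁ in (0:ℝ)..x₂,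
              x₁ * x₂ * Real.exp (-(x₁ * φ / π) - x₂ - x₂ ^ 2 / (4 * γ ^ 2)) :=
        MeasureTheory.setIntegral_congr_fun measurableSet_Ioc
          (fun φ _ => (hNB φ x₂ (le_of_lt hx₂)).symm)
      rw [h1, C_val γ x₂ hγ hx₂]
      unfold Es
      rw [show -((1:ℝ) * x₂) - x₂ ^ 2 / (4 * γ ^ 2) = -x₂ - x₂ ^ 2 / (4 * γ ^ 2) by ring,
        show -((2:ℝ) * x₂) - x₂ ^ 2 / (4 * γ ^ 2)
          = -x₂ + (-x₂ - x₂ ^ 2 / (4 * γ ^ 2)) by ring, Real.exp_add]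
      ring
    rw [step2, MeasureTheory.integral_const_mul, integral_main γ hγ]
  rw [hT]
  have hπ : π ≠ 0 := Real.pi_ne_zero
  field_simp
  ring
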